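/- arXiv:1101.5067 — 4 statements merged into one kernel-verified Lean document; each statement's English description precedes it below -/
import Mathlib

section
/- Let X be a β-set, d ≥ 1, and S = s_d(X) the associated d-symbol. The map sending a hook (a,b) of X to the quadruple (a', b', i, j), where a = a'd + i and b = b'd + j with i, j ∈ {0,…,d−1}, is a bijection between the set H(X) of hooks of X and the set H(S) of hooks of S. -/
/-- `X^{+s} = (X + s) ∪ {0,…,s−1}` for a β-set `X`. -/
def shiftUp (X : Finset ℕ) (s : ℕ) : Finset ℕ :=
  X.image (· + s) ∪ Finset.range s

/-- The `d`-symbol `s_d(X)` associated to a β-set `X`: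
`X_i^{(d)} = {k ∈ ℕ : i + k*d ∈ X}`. -/
def sd (d : ℕ) (X : Finset ℕ) : Fin d → Finset ℕ :=
  fun i => (X.filter fun a => a % d = (i : ℕ)).image fun a => a / d

/-- The inverse of `s_d`, recovering the β-set of a `d`-symbol. -/
def sdInv (d : ℕ) (S : Fin d → Finset ℕ) : Finset ℕ :=
  Finset.univ.biUnion fun i => (S i).image fun k => (i : ℕ) + k * d

/-- Hooks of a β-set `X`: pairs `(a,b)` with `a > b`, `a ∈ X`, `b ∉ X`. -/
def betaHooks (X : Finset ℕ) : Finset (ℕ × ℕ) :=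
  (X ×ˢ Finset.range (X.sup id + 1)).filter fun p => p.2 < p.1 ∧ p.2 ∉ X

/-- Hooks of a `d`-symbol `S`: quadruples `(a,b,i,j)` with `a ∈ S i`, `b ∉ S j`,
and either `a > b`, or `a = b` and `i > j`. -/
def symbolHooks {d : ℕ} (S : Fin d → Finset ℕ) : Finset (ℕ × ℕ × Fin d × Fin d) :=
  (Finset.range ((Finset.univ.sup fun i => (S i).sup id) + 1) ×ˢ
      Finset.range ((Finset.univ.sup fun i => (S i).sup id) + 1) ×ˢ
      (Finset.univ : Finset (Fin d)) ×ˢ (Finset.univ : Finset (Fin d))).filter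
    fun z => z.1 ∈ S z.2.2.1 ∧ z.2.1 ∉ S z.2.2.2 ∧
      (z.2.1 < z.1 ∨ (z.1 = z.2.1 ∧ z.2.2.2 < z.2.2.1))

/-- The partition `p(X)` of a β-set `X = {a_1 > … > a_t}`, as the multiset of the
nonzero numbers among `a_i − (t−i)`; the element `a` contributes the part
`a − #{b ∈ X : b < a}`. -/
def partitionOf (X : Finset ℕ) : Multiset ℕ :=
  Multiset.filter (· ≠ 0) (X.val.map fun a => a - (X.filter (· < a)).card)

/-- `r`, the maximal number of parts among the partitions `p(X_i)` of a `d`-symbol. -/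
def quotCard {d : ℕ} (S : Fin d → Finset ℕ) : ℕ :=
  Finset.univ.sup fun i => Multiset.card (partitionOf (S i))

/-- `Y` is the balanced quotient `Q(S)` of `S`: each `Y i` is the (unique) β-set of
cardinality `r` with `p(Y i) = p(S i)`, where `r` is the maximal number of parts
among the `p(S i)`. -/
def IsBalancedQuotient {d : ℕ} (S Y : Fin d → Finset ℕ) : Prop :=
  ∀ i, (Y i).card = quotCard S ∧ partitionOf (Y i) = partitionOf (S i)

/-- The core `C(S) = ([x_0],…,[x_{d−1}])` of a `d`-symbol, `x_i = |X_i|`. -/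
def coreSymbol {d : ℕ} (S : Fin d → Finset ℕ) : Fin d → Finset ℕ :=
  fun i => Finset.range (S i).card

/-- The `δ`-length `k(a−b) + c_i − c_j` of a hook `(a,b,i,j)`, for the
`d`-hook data tuple `δ = (c_0,…,c_{d−1};k)`. -/
noncomputable def hookLen {d : ℕ} (c : Fin d → ℝ) (k : ℝ)
    (z : ℕ × ℕ × Fin d × Fin d) : ℝ :=
  k * ((z.1 - z.2.1 : ℕ) : ℝ) + c z.2.2.1 - c z.2.2.2

/-- The multiset `𝓗^δ(S)` of `δ`-lengths of all hooks of `S`. -/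
noncomputable def hookLens {d : ℕ} (c : Fin d → ℝ) (k : ℝ)
    (S : Fin d → Finset ℕ) : Multiset ℝ :=
  (symbolHooks S).val.map (hookLen c k)

/-- `H_{ij}^ℓ(S)`, the set of hooks `(a,b,i,j)` of `S` with `a − b = ℓ`. -/
def Hij {d : ℕ} (S : Fin d → Finset ℕ) (i j : Fin d) (ℓ : ℕ) :
    Finset (ℕ × ℕ × Fin d × Fin d) :=
  (symbolHooks S).filter fun z => z.2.2.1 = i ∧ z.2.2.2 = j ∧ z.1 - z.2.1 = ℓ

/-- The sign-modified length `h̄^{δ_S}` (on hooks of the balanced quotient), where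
`x` records the cardinalities `x_i = |X_i|` of `S`, and `δ_S = (c_i + x_i k; k)`.
For a hook `z = (a,b,u,v)` with `ℓ = a − b`: relabelling so that `Δ = x_i − x_j ≥ 0`,
the sign is `+` if `z` lies in position `(i,j)`, or in position `(j,i)` with `ℓ > Δ`,
or in position `(j,i)` with `ℓ = Δ` and `i < j`; otherwise the sign is `−`. -/
noncomputable def signedLen {d : ℕ} (x : Fin d → ℕ) (c : Fin d → ℝ) (k : ℝ)
    (z : ℕ × ℕ × Fin d × Fin d) : ℝ :=
  if x z.2.2.2 ≤ x z.2.2.1 then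
    k * ((z.1 - z.2.1 : ℕ) : ℝ) + (c z.2.2.1 + (x z.2.2.1 : ℝ) * k)
      - (c z.2.2.2 + (x z.2.2.2 : ℝ) * k)
  else if x z.2.2.2 - x z.2.2.1 < z.1 - z.2.1 ∨
      (z.1 - z.2.1 = x z.2.2.2 - x z.2.2.1 ∧ (z.2.2.2 : ℕ) < (z.2.2.1 : ℕ)) then
    k * ((z.1 - z.2.1 : ℕ) : ℝ) + (c z.2.2.1 + (x z.2.2.1 : ℝ) * k)
      - (c z.2.2.2 + (x z.2.2.2 : ℝ) * k)
  else
    -(k * ((z.1 - z.2.1 : ℕ) : ℝ) + (c z.2.2.1 + (x z.2.2.1 : ℝ) * k)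
      - (c z.2.2.2 + (x z.2.2.2 : ℝ) * k))

/-- The permutation `σ_{d,ℓ,e}` of `ℕ`:
`σ(r(dℓ) + sd + t) = r(dℓ) + sd + ((t + re) mod d)`. -/
def twistFun (d ℓ e : ℕ) (n : ℕ) : ℕ :=
  d * ℓ * (n / (d * ℓ)) + d * (n % (d * ℓ) / d) + (n % d + n / (d * ℓ) * e) % d

lemma mulAdd_mod {d : ℕ} (k : ℕ) (i : Fin d) : (k * d + (i : ℕ)) % d = (i : ℕ) := by
  rw [Nat.add_comm, Nat.add_mul_mod_self_right, Nat.mod_eq_of_lt i.isLt]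

lemma mulAdd_div {d : ℕ} (hd : 0 < d) (k : ℕ) (i : Fin d) :
    (k * d + (i : ℕ)) / d = k := by
  rw [Nat.add_comm, Nat.add_mul_div_right _ _ hd, Nat.div_eq_of_lt i.isLt, Nat.zero_add]

lemma mem_sd_iff {d : ℕ} (hd : 0 < d) (X : Finset ℕ) (i : Fin d) (k : ℕ) :
    k ∈ sd d X i ↔ k * d + (i : ℕ) ∈ X := by
  simp only [sd, Finset.mem_image, Finset.mem_filter]
  constructor
  · rintro ⟨a, ⟨ha, hmod⟩, hdiv⟩
    have := Nat.div_add_mod a d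
    rw [hdiv, hmod] at this
    rwa [mul_comm k d, this]
  · intro h
    exact ⟨k * d + (i : ℕ), ⟨h, mulAdd_mod k i⟩, mulAdd_div hd k i⟩

lemma mem_betaHooks_iff {X : Finset ℕ} {p : ℕ × ℕ} :
    p ∈ betaHooks X ↔ p.1 ∈ X ∧ p.2 < p.1 ∧ p.2 ∉ X := by
  simp only [betaHooks, Finset.mem_filter, Finset.mem_product, Finset.mem_range]
  constructor
  · rintro ⟨⟨h1, _⟩, h3, h4⟩; exact ⟨h1, h3, h4⟩
  · rintro ⟨h1, h3, h4⟩
    exact ⟨⟨h1, lt_of_lt_of_le h3 (Nat.lt_succ_of_le (Finset.le_sup (f := id) h1)).le⟩, h3, h4⟩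

lemma mem_symbolHooks_iff {d : ℕ} {S : Fin d → Finset ℕ} {z : ℕ × ℕ × Fin d × Fin d} :
    z ∈ symbolHooks S ↔ z.1 ∈ S z.2.2.1 ∧ z.2.1 ∉ S z.2.2.2 ∧
      (z.2.1 < z.1 ∨ (z.1 = z.2.1 ∧ z.2.2.2 < z.2.2.1)) := by
  simp only [symbolHooks, Finset.mem_filter, Finset.mem_product, Finset.mem_range,
    Finset.mem_univ, and_true, true_and]
  constructor
  · rintro ⟨_, h⟩; exact h
  · rintro ⟨h1, h2, h3⟩
    have ha : z.1 ≤ Finset.univ.sup fun i => (S i).sup id :=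
      le_trans (Finset.le_sup (f := id) h1)
        (Finset.le_sup (f := fun i => (S i).sup id) (Finset.mem_univ _))
    have hb : z.2.1 ≤ Finset.univ.sup fun i => (S i).sup id := by
      rcases h3 with h | ⟨h, _⟩
      · exact le_trans h.le ha
      · exact h ▸ ha
    exact ⟨⟨Nat.lt_succ_of_le ha, Nat.lt_succ_of_le hb⟩, h1, h2, h3⟩

lemma lt_iff_divmod {d : ℕ} (hd : 0 < d) (a b : ℕ) :
    b < a ↔ b / d < a / d ∨ (a / d = b / d ∧ b % d < a % d) := by
  constructor
  · intro h
    rcases lt_or_eq_of_le (Nat.div_le_div_right (c := d) h.le) with h' | h'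
    · exact Or.inl h'
    · refine Or.inr ⟨h'.symm, ?_⟩
      have hb := Nat.div_add_mod b d
      have ha := Nat.div_add_mod a d
      rw [h'] at hb
      omega
  · intro h
    have hb := Nat.div_add_mod b d
    have ha := Nat.div_add_mod a d
    rcases h with h | ⟨h, h'⟩
    · have : d * (b / d) + d ≤ d * (a / d) := by
        have := Nat.mul_le_mul_left d h
        nlinarith
      have := Nat.mod_lt b hd
      omega
    · rw [h] at ha; omega

/-- The map sending a hook `(a,b)` of the β-set `X` to `(a', b', i, j)`, where
`a = a'd + i`, `b = b'd + j` with `i, j ∈ {0,…,d−1}`, is a bijection between the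
hooks of `X` and the hooks of the associated `d`-symbol `s_d(X)`. -/
theorem betaHooks_bijOn_symbolHooks (d : ℕ) (hd : 0 < d) (X : Finset ℕ) :
    Set.BijOn
      (fun p : ℕ × ℕ =>
        ((p.1 / d, p.2 / d, ⟨p.1 % d, Nat.mod_lt _ hd⟩, ⟨p.2 % d, Nat.mod_lt _ hd⟩) :
          ℕ × ℕ × Fin d × Fin d))
      (betaHooks X : Set (ℕ × ℕ))
      (symbolHooks (sd d X) : Set (ℕ × ℕ × Fin d × Fin d)) := by
  refine ⟨?_, ?_, ?_⟩
  · -- MapsTo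
    intro p hp
    simp only [Finset.coe_filter, Set.mem_setOf_eq, Finset.mem_coe, mem_betaHooks_iff] at hp
    obtain ⟨ha, hba, hb⟩ := hp
    simp only [Finset.mem_coe, mem_symbolHooks_iff, mem_sd_iff hd]
    refine ⟨?_, ?_, ?_⟩
    · rw [Nat.div_add_mod']; exact ha
    · rw [Nat.div_add_mod']; exact hb
    · have := (lt_iff_divmod hd p.1 p.2).mp hba
      rcases this with h | ⟨h, h'⟩
      · exact Or.inl h
      · exact Or.inr ⟨h, Fin.lt_def.mp h'⟩
  · -- InjOn
    intro p _ q _ h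
    simp only [Prod.mk.injEq, Fin.mk.injEq] at h
    obtain ⟨h1, h2, h3, h4⟩ := h
    have e1 := Nat.div_add_mod p.1 d
    have e2 := Nat.div_add_mod q.1 d
    have e3 := Nat.div_add_mod p.2 d
    have e4 := Nat.div_add_mod q.2 d
    rw [h1, h3] at e1
    rw [h2, h4] at e3
    exact Prod.ext (by omega) (by omega)
  · -- SurjOn
    intro z hz
    simp only [Finset.mem_coe, mem_symbolHooks_iff, mem_sd_iff hd] at hz
    obtain ⟨ha, hb, hord⟩ := hz
    refine ⟨(z.1 * d + (z.2.2.1 : ℕ), z.2.1 * d + (z.2.2.2 : ℕ)), ?_, ?_⟩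
    · simp only [Finset.mem_coe, mem_betaHooks_iff]
      refine ⟨ha, ?_, hb⟩
      rw [lt_iff_divmod hd]
      rw [mulAdd_div hd, mulAdd_div hd, mulAdd_mod, mulAdd_mod]
      rcases hord with h | ⟨h, h'⟩
      · exact Or.inl h
      · exact Or.inr ⟨h, Fin.lt_def.mp h'⟩
    · show ((_ : ℕ × ℕ × Fin d × Fin d)) = z
      rw [Prod.ext_iff, Prod.ext_iff, Prod.ext_iff]
      exact ⟨mulAdd_div hd _ _, mulAdd_div hd _ _,
        Fin.ext (mulAdd_mod _ _), Fin.ext (mulAdd_mod _ _)⟩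
end

section
/- Let S = (X_0, …, X_{d−1}) be a d-symbol, i, j ∈ {0,…,d−1}, and ℓ ≥ 0. Then the number of hooks (a,b,i,j) of S with a − b = ℓ equals |X_i| − |X_i ∩ X_j^{+ℓ}| if ℓ > 0, or if ℓ = 0 and i > j; and it equals 0 if ℓ = 0 and i ≤ j. -/
/-- The number of hooks `(a,b,i,j)` of a `d`-symbol `S` with `a − b = ℓ` equals
`|X_i| − |X_i ∩ X_j^{+ℓ}|` if `ℓ > 0`, or if `ℓ = 0` and `i > j`; and it equals `0`
if `ℓ = 0` and `i ≤ j`. -/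
theorem card_Hij (d : ℕ) (hd : 0 < d) (S : Fin d → Finset ℕ) (i j : Fin d) (ℓ : ℕ) :
    ((0 < ℓ ∨ (ℓ = 0 ∧ j < i)) →
      (Hij S i j ℓ).card = (S i).card - (S i ∩ shiftUp (S j) ℓ).card) ∧
    ((ℓ = 0 ∧ i ≤ j) → (Hij S i j ℓ).card = 0) := by
  constructor
  · intro h
    have key : Hij S i j ℓ = (S i \ shiftUp (S j) ℓ).image (fun a => (a, a - ℓ, i, j)) := by
      ext z
      obtain ⟨a, b, u, v⟩ := z
      simp only [Hij, symbolHooks, Finset.mem_filter, Finset.mem_image, Finset.mem_sdiff,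
        Finset.mem_product, Finset.mem_univ, Finset.mem_range, and_true, true_and,
        Prod.mk.injEq]
      constructor
      · rintro ⟨⟨⟨hA, hB⟩, ha, hb, hcond⟩, hu, hv, hl⟩
        subst hu; subst hv
        have hab : a = b + ℓ ∧ ℓ ≤ a := by
          rcases h with hℓ | ⟨hℓ, hij⟩
          · rcases hcond with hba | ⟨rfl, hvu⟩ <;> omega
          · rcases hcond with hba | ⟨rfl, hvu⟩ <;> omega
        refine ⟨a, ⟨ha, ?_⟩, rfl, by omega, rfl, rfl⟩
        intro hmem
        simp only [shiftUp, Finset.mem_union, Finset.mem_image, Finset.mem_range] at hmem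
        rcases hmem with ⟨x, hx, hxa⟩ | hlt
        · have : x = b := by omega
          exact hb (this ▸ hx)
        · omega
      · rintro ⟨x, ⟨hx, hx2⟩, rfl, rfl, rfl, rfl⟩
        simp only [shiftUp, Finset.mem_union, Finset.mem_image, Finset.mem_range, not_or,
          not_exists, not_and, not_lt] at hx2
        obtain ⟨hx1, hxl⟩ := hx2
        have hxb : x - ℓ ∉ S j := fun hmem => absurd (by omega : x - ℓ + ℓ = x) (hx1 _ hmem)
        have hxN : x ≤ Finset.univ.sup fun i => (S i).sup id :=
          le_trans (Finset.le_sup (f := id) hx)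
            (Finset.le_sup (f := fun i => (S i).sup id) (Finset.mem_univ i))
        refine ⟨⟨⟨by omega, by omega⟩, hx, hxb, ?_⟩, rfl, rfl, by omega⟩
        rcases h with hℓ | ⟨hℓ, hij⟩
        · left; omega
        · right; exact ⟨by omega, hij⟩
    have hinj : Set.InjOn (fun a => (a, a - ℓ, i, j)) ↑(S i \ shiftUp (S j) ℓ) := by
      intro a _ b _ hab
      exact ((Prod.mk.injEq _ _ _ _).mp hab).1
    rw [key, Finset.card_image_of_injOn hinj]
    have := Finset.card_inter_add_card_sdiff (S i) (shiftUp (S j) ℓ)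
    omega
  · rintro ⟨rfl, hij⟩
    rw [Finset.card_eq_zero]
    ext z
    obtain ⟨a, b, u, v⟩ := z
    simp only [Hij, Finset.mem_filter, Finset.notMem_empty, iff_false, not_and]
    intro hsym hu hv hl
    subst hu; subst hv
    simp only [symbolHooks, Finset.mem_filter] at hsym
    rcases hsym.2.2.2 with hba | ⟨rfl, hvu⟩
    · omega
    · exact absurd hij (not_le.mpr hvu)
end

section
/- Let X be a β-set and d ≥ 1. Then |p(X)| = |q_d(X)| + |c_d(X)|, where q_d(X) = p(Q(s_d(X))) is the d-quotient partition of X and c_d(X) = p(C(s_d(X))) is the d-core partition of X. -/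
private def triNum (n : ℕ) : ℕ := ∑ i ∈ Finset.range n, i

private lemma msum_filter_ne_zero' (s : Multiset ℕ) :
    (Multiset.filter (· ≠ 0) s).sum = s.sum := by
  have h := Multiset.filter_add_not (fun a => a ≠ 0) s
  have h2 : (Multiset.filter (fun a => ¬ a ≠ 0) s).sum = 0 := by
    apply Multiset.sum_eq_zero
    intro x hx
    have := Multiset.of_mem_filter hx
    simpa using this
  calc (Multiset.filter (· ≠ 0) s).sum
      = (Multiset.filter (· ≠ 0) s).sum + (Multiset.filter (fun a => ¬ a ≠ 0) s).sum := by
        rw [h2]; ring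
    _ = s.sum := by rw [← Multiset.sum_add, h]

private lemma cnt_strictmono' {X : Finset ℕ} {a b : ℕ} (ha : a ∈ X) (hab : a < b) :
    (X.filter (· < a)).card < (X.filter (· < b)).card := by
  apply Finset.card_lt_card
  have hsub : X.filter (· < a) ⊆ X.filter (· < b) :=
    Finset.monotone_filter_right X (fun x _ hx => lt_trans hx hab)
  exact (Finset.ssubset_iff_of_subset hsub).2
    ⟨a, Finset.mem_filter.2 ⟨ha, by simpa using hab⟩, by simp⟩

private lemma cnt_image' (X : Finset ℕ) :
    X.image (fun a => (X.filter (· < a)).card) = Finset.range X.card := by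
  apply Finset.eq_of_subset_of_card_le
  · intro c hc
    simp only [Finset.mem_image] at hc
    obtain ⟨a, ha, rfl⟩ := hc
    rw [Finset.mem_range]
    apply Finset.card_lt_card
    rw [Finset.filter_ssubset]
    exact ⟨a, ha, by simp⟩
  · rw [Finset.card_range, Finset.card_image_of_injOn]
    intro x hx y hy hxy
    by_contra hne
    rcases lt_or_gt_of_ne hne with h | h
    · exact absurd hxy (Nat.ne_of_lt (cnt_strictmono' hx h))
    · exact absurd hxy.symm (Nat.ne_of_lt (cnt_strictmono' hy h))

private lemma sum_cnt' (X : Finset ℕ) :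
    ∑ a ∈ X, (X.filter (· < a)).card = triNum X.card := by
  have hinj : ∀ x ∈ X, ∀ y ∈ X,
      (X.filter (· < x)).card = (X.filter (· < y)).card → x = y := by
    intro x hx y hy hxy
    by_contra hne
    rcases lt_or_gt_of_ne hne with h | h
    · exact absurd hxy (Nat.ne_of_lt (cnt_strictmono' hx h))
    · exact absurd hxy.symm (Nat.ne_of_lt (cnt_strictmono' hy h))
  rw [triNum, ← cnt_image' X, Finset.sum_image hinj]

private lemma partitionOf_sum (X : Finset ℕ) :
    (partitionOf X).sum + triNum X.card = ∑ a ∈ X, a := by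
  rw [partitionOf, msum_filter_ne_zero']
  have : (Multiset.map (fun a => a - (X.filter (· < a)).card) X.val).sum
      = ∑ a ∈ X, (a - (X.filter (· < a)).card) := rfl
  rw [this, ← sum_cnt' X, ← Finset.sum_add_distrib]
  apply Finset.sum_congr rfl
  intro a ha
  have hle : (X.filter (· < a)).card ≤ a := by
    calc (X.filter (· < a)).card ≤ (Finset.range a).card := by
          apply Finset.card_le_card
          intro b hb
          simp only [Finset.mem_filter] at hb
          simpa using hb.2
      _ = a := Finset.card_range a
  omega

private lemma sdInv_disj {d : ℕ} (S : Fin d → Finset ℕ) :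
    ∀ i ∈ (Finset.univ : Finset (Fin d)), ∀ j ∈ Finset.univ, i ≠ j →
      Disjoint ((S i).image fun k => (i : ℕ) + k * d)
        ((S j).image fun k => (j : ℕ) + k * d) := by
  intro i _ j _ hij
  rw [Finset.disjoint_left]
  intro a ha hb
  simp only [Finset.mem_image] at ha hb
  obtain ⟨k, _, rfl⟩ := ha
  obtain ⟨l, _, he⟩ := hb
  apply hij
  have h1 : ((i : ℕ) + k * d) % d = (i : ℕ) % d := Nat.add_mul_mod_self_right _ _ _
  have h2 : ((j : ℕ) + l * d) % d = (j : ℕ) % d := Nat.add_mul_mod_self_right _ _ _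
  have : (i : ℕ) % d = (j : ℕ) % d := by rw [← h1, ← h2, he]
  rw [Nat.mod_eq_of_lt i.isLt, Nat.mod_eq_of_lt j.isLt] at this
  exact Fin.ext this

private lemma sdInv_inj {d : ℕ} (hd : 0 < d) (i : Fin d) :
    Function.Injective (fun k : ℕ => (i : ℕ) + k * d) := by
  intro k l h
  simp only at h
  exact Nat.eq_of_mul_eq_mul_right hd (by omega : k * d = l * d)

private lemma sdInv_card {d : ℕ} (hd : 0 < d) (S : Fin d → Finset ℕ) :
    (sdInv d S).card = ∑ i, (S i).card := by
  rw [sdInv, Finset.card_biUnion (sdInv_disj S)]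
  exact Finset.sum_congr rfl fun i _ =>
    Finset.card_image_of_injective _ (sdInv_inj hd i)

private lemma sdInv_sum {d : ℕ} (hd : 0 < d) (S : Fin d → Finset ℕ) :
    ∑ a ∈ sdInv d S, a = ∑ i, ((S i).card * (i : ℕ) + d * ∑ k ∈ S i, k) := by
  rw [sdInv, Finset.sum_biUnion (sdInv_disj S)]
  apply Finset.sum_congr rfl
  intro i _
  rw [Finset.sum_image (fun x _ y _ h => sdInv_inj hd i h)]
  rw [Finset.sum_add_distrib, Finset.sum_const, Finset.mul_sum]
  simp [mul_comm, Nat.smul_one_eq_cast]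

private lemma sdInv_sd {d : ℕ} (hd : 0 < d) (X : Finset ℕ) : sdInv d (sd d X) = X := by
  ext a
  simp only [sdInv, sd, Finset.mem_biUnion, Finset.mem_univ, true_and, Finset.mem_image,
    Finset.mem_filter]
  constructor
  · rintro ⟨i, k, ⟨b, ⟨hb, hbmod⟩, rfl⟩, rfl⟩
    have : (i : ℕ) + b / d * d = b := by
      conv_rhs => rw [← Nat.mod_add_div b d]
      rw [hbmod]; ring
    rwa [this]
  · intro ha
    refine ⟨⟨a % d, Nat.mod_lt a hd⟩, a / d, ⟨a, ⟨ha, rfl⟩, rfl⟩, ?_⟩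
    conv_rhs => rw [← Nat.mod_add_div a d]
    ring

private lemma two_triNum (n : ℕ) : 2 * triNum n = n * (n - 1) := by
  rw [triNum, ← Finset.sum_range_id_mul_two n]; ring

private lemma triNum_mul (d r : ℕ) :
    triNum (d * r) = d * (d * triNum r) + r * triNum d := by
  have key : 2 * triNum (d * r) = 2 * (d * (d * triNum r)) + 2 * (r * triNum d) := by
    rcases Nat.eq_zero_or_pos d with rfl | hd
    · simp [triNum]
    rcases Nat.eq_zero_or_pos r with rfl | hr
    · simp [triNum]
    obtain ⟨d', rfl⟩ : ∃ d', d = d' + 1 := ⟨d - 1, by omega⟩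
    obtain ⟨r', rfl⟩ : ∃ r', r = r' + 1 := ⟨r - 1, by omega⟩
    have h := two_triNum ((d' + 1) * (r' + 1))
    have h1 := two_triNum (r' + 1)
    have h2 := two_triNum (d' + 1)
    have hsub : (d' + 1) * (r' + 1) - 1 = d' * r' + d' + r' := by
      have : (d' + 1) * (r' + 1) = d' * r' + d' + r' + 1 := by ring
      omega
    rw [hsub] at h
    simp only [Nat.add_sub_cancel] at h1 h2
    calc 2 * triNum ((d' + 1) * (r' + 1))
        = (d' + 1) * (r' + 1) * (d' * r' + d' + r') := h
      _ = (d' + 1) * ((d' + 1) * ((r' + 1) * r')) + (r' + 1) * ((d' + 1) * d') := by ring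
      _ = (d' + 1) * ((d' + 1) * (2 * triNum (r' + 1))) + (r' + 1) * (2 * triNum (d' + 1)) := by
          rw [h1, h2]
      _ = 2 * ((d' + 1) * ((d' + 1) * triNum (r' + 1)))
          + 2 * ((r' + 1) * triNum (d' + 1)) := by ring
  have := key
  generalize triNum (d * r) = a at this ⊢
  generalize d * (d * triNum r) = b at this ⊢
  generalize r * triNum d = c at this ⊢
  omega


/-- `|p(X)| = |q_d(X)| + |c_d(X)|`: the size of the partition of a β-set `X` is the
size of its `d`-quotient partition `q_d(X) = p(Q(s_d X))` plus the size of its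
`d`-core partition `c_d(X) = p(C(s_d X))` (where `p` of a symbol `T` is
`p(s_d⁻¹ T)`). -/
theorem partition_sum_eq_quot_add_core (d : ℕ) (hd : 0 < d) (X : Finset ℕ)
    (Y : Fin d → Finset ℕ) (hY : IsBalancedQuotient (sd d X) Y) :
    (partitionOf X).sum =
      (partitionOf (sdInv d Y)).sum + (partitionOf (sdInv d (coreSymbol (sd d X)))).sum := by
  classical
  set S := sd d X with hS
  set r := quotCard S with hr
  -- abbreviations
  set B := ∑ i, (S i).card * (i : ℕ) with hB
  set SA := ∑ i, ∑ k ∈ S i, k with hSA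
  set t := ∑ i, (S i).card with ht
  set CX := ∑ i, triNum (S i).card with hCX
  set sY := ∑ i, ∑ k ∈ Y i, k with hsY
  have hfinTd : ∑ i : Fin d, (i : ℕ) = triNum d := by
    rw [triNum, ← Fin.sum_univ_eq_sum_range (fun i => i) d]
  -- h1 : about X
  have hXeq : sdInv d S = X := sdInv_sd hd X
  have h1 : (partitionOf X).sum + triNum t = B + d * SA := by
    have h := partitionOf_sum (sdInv d S)
    rw [sdInv_card hd, sdInv_sum hd, Finset.sum_add_distrib, ← Finset.mul_sum, hXeq] at h
    exact h
  -- h2 : about sdInv d Y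
  have hYcard : ∀ i, (Y i).card = r := fun i => (hY i).1
  have h2 : (partitionOf (sdInv d Y)).sum + triNum (d * r) = r * triNum d + d * sY := by
    have hc : (sdInv d Y).card = d * r := by
      rw [sdInv_card hd]
      simp [hYcard, Finset.sum_const, Finset.card_univ, mul_comm]
    have hs : ∑ a ∈ sdInv d Y, a = r * triNum d + d * sY := by
      rw [sdInv_sum hd, Finset.sum_add_distrib, ← Finset.mul_sum]
      congr 1
      rw [← hfinTd, Finset.mul_sum]
      exact Finset.sum_congr rfl fun i _ => by rw [hYcard i, mul_comm]
    have := partitionOf_sum (sdInv d Y)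
    rw [hc, hs] at this
    exact this
  -- h3 : per-i balanced quotient relation, summed
  have h3 : sY + CX = SA + d * triNum r := by
    have hper : ∀ i, (∑ k ∈ Y i, k) + triNum (S i).card
        = (∑ k ∈ S i, k) + triNum r := by
      intro i
      have pa := partitionOf_sum (Y i)
      have pb := partitionOf_sum (S i)
      rw [(hY i).2, hYcard i] at pa
      omega
    rw [hsY, hCX, ← Finset.sum_add_distrib]
    have : ∑ i, ((∑ k ∈ Y i, k) + triNum (S i).card)
        = ∑ i, ((∑ k ∈ S i, k) + triNum r) := Finset.sum_congr rfl fun i _ => hper i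
    rw [this, Finset.sum_add_distrib, Finset.sum_const, Finset.card_univ]
    simp [hSA, mul_comm, Fintype.card_fin]
  -- h4 : about the core
  have h4 : (partitionOf (sdInv d (coreSymbol S))).sum + triNum t = B + d * CX := by
    have hc : (sdInv d (coreSymbol S)).card = t := by
      rw [sdInv_card hd]
      simp [coreSymbol, ht]
    have hs : ∑ a ∈ sdInv d (coreSymbol S), a = B + d * CX := by
      rw [sdInv_sum hd]
      have he : ∀ i : Fin d, ((coreSymbol S i).card * (i : ℕ) + d * ∑ k ∈ coreSymbol S i, k)
          = (S i).card * (i : ℕ) + d * triNum (S i).card := by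
        intro i; simp [coreSymbol, triNum]
      rw [Finset.sum_congr rfl (fun i _ => he i), Finset.sum_add_distrib, ← Finset.mul_sum]
    have := partitionOf_sum (sdInv d (coreSymbol S))
    rw [hc, hs] at this
    exact this
  -- h5 : triangle number identity
  have h5 : triNum (d * r) = d * (d * triNum r) + r * triNum d := triNum_mul d r
  -- multiply h3 by d
  have hm : d * sY + d * CX = d * SA + d * (d * triNum r) := by
    have : d * (sY + CX) = d * (SA + d * triNum r) := by rw [h3]
    rw [Nat.mul_add, Nat.mul_add] at this
    exact this
  -- final linear arithmetic over atoms
  have goal2 : (partitionOf X).sum + (triNum t + (triNum (d * r) + d * sY + d * CX))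
      = (partitionOf (sdInv d Y)).sum + (partitionOf (sdInv d (coreSymbol S))).sum
        + (triNum t + (triNum (d * r) + d * sY + d * CX)) := by
    generalize (partitionOf X).sum = P at *
    generalize (partitionOf (sdInv d Y)).sum = PW at *
    generalize (partitionOf (sdInv d (coreSymbol S))).sum = PZ at *
    generalize triNum t = Tt at *
    generalize triNum (d * r) = Tdr at *
    generalize hA1 : d * SA = dSA at *
    generalize hA2 : r * triNum d = rTd at *
    generalize hA3 : d * sY = dsY at *
    generalize hA4 : d * CX = dCX at *
    generalize hA5 : d * (d * triNum r) = ddTr at *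
    omega
  omega
end

section
/- Let S be a d-symbol with balanced quotient Q(S) and core C(S). Then |H(S)| = |H(Q(S))| + |H(C(S))|, i.e., the number of hooks of S equals the number of hooks of its balanced quotient plus the number of hooks of its core. -/
open Finset


lemma mem_shiftUp {X : Finset ℕ} {s n : ℕ} :
    n ∈ shiftUp X s ↔ (∃ a ∈ X, a + s = n) ∨ n < s := by
  simp [shiftUp]

def addEmb (s : ℕ) : ℕ ↪ ℕ := ⟨(· + s), add_left_injective s⟩

lemma shiftUp_eq_map (X : Finset ℕ) (s : ℕ) :
    shiftUp X s = X.map (addEmb s) ∪ Finset.range s := by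
  rw [shiftUp, Finset.map_eq_image]; rfl

lemma shiftUp_zero (X : Finset ℕ) : shiftUp X 0 = X := by
  ext n; simp [mem_shiftUp]

lemma shiftUp_one (X : Finset ℕ) : shiftUp X 1 = insert 0 (X.map (addEmb 1)) := by
  ext n
  simp only [mem_shiftUp, Finset.mem_insert, Finset.mem_map, addEmb,
    Function.Embedding.coeFn_mk]
  constructor
  · rintro (⟨a, ha, rfl⟩ | h)
    · exact Or.inr ⟨a, ha, rfl⟩
    · left; omega
  · rintro (rfl | ⟨a, ha, rfl⟩)
    · right; omega
    · exact Or.inl ⟨a, ha, rfl⟩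

lemma zero_notMem_map_add_one (X : Finset ℕ) : 0 ∉ X.map (addEmb 1) := by
  simp [addEmb]

lemma card_shiftUp (X : Finset ℕ) (s : ℕ) : (shiftUp X s).card = X.card + s := by
  rw [shiftUp_eq_map, Finset.card_union_of_disjoint, Finset.card_map, Finset.card_range]
  rw [Finset.disjoint_left]
  rintro n hn hr
  simp only [Finset.mem_map, addEmb, Function.Embedding.coeFn_mk] at hn
  rw [Finset.mem_range] at hr
  omega

lemma shiftUp_shiftUp (X : Finset ℕ) (s : ℕ) :
    shiftUp (shiftUp X s) 1 = shiftUp X (s + 1) := by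
  ext n
  simp only [mem_shiftUp]
  constructor
  · rintro (⟨a, ha, rfl⟩ | h)
    · rcases ha with ⟨b, hb, rfl⟩ | h2
      · exact Or.inl ⟨b, hb, by omega⟩
      · right; omega
    · right; omega
  · rintro (⟨a, ha, rfl⟩ | h)
    · exact Or.inl ⟨a + s, Or.inl ⟨a, ha, rfl⟩, by omega⟩
    · rcases Nat.lt_or_ge n 1 with h1 | h1
      · right; omega
      · exact Or.inl ⟨n - 1, Or.inr (by omega), by omega⟩

lemma shiftUp_range (x s : ℕ) : shiftUp (Finset.range x) s = Finset.range (x + s) := by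
  ext n
  simp only [mem_shiftUp, Finset.mem_range]
  constructor
  · rintro (⟨a, ha, rfl⟩ | h) <;> omega
  · intro h
    rcases Nat.lt_or_ge n s with h1 | h1
    · right; omega
    · exact Or.inl ⟨n - s, by omega, by omega⟩


def gz (X Y : Finset ℕ) : ℤ :=
  ∑ a ∈ X, ((a : ℤ) - ((Y.filter (· < a)).card : ℤ))

def ezz (X Y : Finset ℕ) : ℤ := ((X \ Y).card : ℤ)

lemma filter_lt_zero (Y : Finset ℕ) : Y.filter (· < 0) = ∅ := by
  apply Finset.filter_false_of_mem; intro a _; omega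

lemma filter_lt_succ_card (Y : Finset ℕ) (a : ℕ) :
    ((Y.filter (· < a + 1)).card : ℤ)
      = ((Y.filter (· < a)).card : ℤ) + (if a ∈ Y then 1 else 0) := by
  have h1 : Y.filter (· < a + 1) = Y.filter (· < a) ∪ Y.filter (· = a) := by
    rw [← Finset.filter_or]
    apply Finset.filter_congr; intro b _; omega
  have h2 : Disjoint (Y.filter (· < a)) (Y.filter (· = a)) := by
    rw [Finset.disjoint_left]; intro b hb hb'
    simp only [Finset.mem_filter] at hb hb'; omega
  rw [h1, Finset.card_union_of_disjoint h2, Finset.filter_eq']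
  split <;> simp

lemma card_filter_lt_le (Y : Finset ℕ) (a : ℕ) : (Y.filter (· < a)).card ≤ a := by
  calc (Y.filter (· < a)).card ≤ (Finset.range a).card := by
        apply Finset.card_le_card; intro b hb
        simp only [Finset.mem_filter] at hb; simp [hb.2]
    _ = a := Finset.card_range a

lemma gz_shiftUp_left (X Y : Finset ℕ) :
    gz (shiftUp X 1) Y = gz X Y + ((X \ Y).card : ℤ) := by
  rw [shiftUp_one, gz, Finset.sum_insert (zero_notMem_map_add_one X), Finset.sum_map]
  have h0 : ((0:ℕ) : ℤ) - ((Y.filter (· < 0)).card : ℤ) = 0 := by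
    rw [filter_lt_zero]; simp
  rw [h0, zero_add]
  have : ∀ a ∈ X, ((addEmb 1 a : ℤ) - ((Y.filter (· < addEmb 1 a)).card : ℤ))
      = ((a : ℤ) - ((Y.filter (· < a)).card : ℤ)) + (1 - if a ∈ Y then 1 else 0) := by
    intro a _
    have : (addEmb 1 a) = a + 1 := rfl
    rw [this, filter_lt_succ_card]
    push_cast; ring
  rw [Finset.sum_congr rfl this, Finset.sum_add_distrib]
  congr 1
  rw [Finset.sum_sub_distrib, Finset.sum_const]
  have hfilt : ∑ a ∈ X, (if a ∈ Y then (1:ℤ) else 0) = ((X ∩ Y).card : ℤ) := by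
    rw [Finset.sum_ite_mem, Finset.sum_const]; simp
  rw [hfilt]
  have hsd : (X \ Y).card + (X ∩ Y).card = X.card := Finset.card_sdiff_add_card_inter X Y
  have : ((X \ Y).card : ℤ) + ((X ∩ Y).card : ℤ) = (X.card : ℤ) := by exact_mod_cast hsd
  simp only [nsmul_eq_mul, mul_one]
  linarith

lemma filter_map_add_one (Y : Finset ℕ) (p : ℕ → Prop) [DecidablePred p] :
    (Y.map (addEmb 1)).filter p = (Y.filter (fun b => p (b + 1))).map (addEmb 1) := by
  rw [Finset.filter_map]; rfl

lemma card_filter_lt_shiftUp (Y : Finset ℕ) (a : ℕ) :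
    (((shiftUp Y 1).filter (· < a)).card : ℤ)
      = (if 0 < a then 1 else 0) + ((Y.filter (fun b => b + 1 < a)).card : ℤ) := by
  rw [shiftUp_one, Finset.filter_insert]
  by_cases h : 0 < a
  · rw [if_pos h, if_pos h, Finset.card_insert_of_notMem, filter_map_add_one,
      Finset.card_map]
    · push_cast; ring
    · intro hmem
      rw [filter_map_add_one] at hmem
      simp only [Finset.mem_map, addEmb, Function.Embedding.coeFn_mk] at hmem
      obtain ⟨b, _, hb⟩ := hmem; omega
  · rw [if_neg h, if_neg h, filter_map_add_one, Finset.card_map]; simp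

lemma card_filter_lt_split (Y : Finset ℕ) (a : ℕ) :
    ((Y.filter (· < a)).card : ℤ)
      = ((Y.filter (fun b => b + 1 < a)).card : ℤ)
        + (if a ∈ Y.map (addEmb 1) then 1 else 0) := by
  have h1 : Y.filter (· < a) = Y.filter (fun b => b + 1 < a) ∪ Y.filter (fun b => b + 1 = a) := by
    rw [← Finset.filter_or]
    apply Finset.filter_congr; intro b _; omega
  have h2 : Disjoint (Y.filter (fun b => b + 1 < a)) (Y.filter (fun b => b + 1 = a)) := by
    rw [Finset.disjoint_left]; intro b hb hb'
    simp only [Finset.mem_filter] at hb hb'; omega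
  have h3 : (Y.filter (fun b => b + 1 = a)).card = ((Y.map (addEmb 1)).filter (· = a)).card := by
    rw [filter_map_add_one, Finset.card_map]
  rw [h1, Finset.card_union_of_disjoint h2]
  push_cast
  rw [h3, Finset.filter_eq']
  split <;> simp

-- L2
lemma gz_shiftUp_right (X Y : Finset ℕ) :
    gz X (shiftUp Y 1) = gz X Y + ((X ∩ Y.map (addEmb 1)).card : ℤ)
      - ((X.filter (fun a => 0 < a)).card : ℤ) := by
  unfold gz
  have : ∀ a ∈ X, ((a : ℤ) - (((shiftUp Y 1).filter (· < a)).card : ℤ))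
      = ((a : ℤ) - ((Y.filter (· < a)).card : ℤ))
        + (if a ∈ Y.map (addEmb 1) then 1 else 0) - (if 0 < a then 1 else 0) := by
    intro a _
    rw [card_filter_lt_shiftUp, card_filter_lt_split Y a]
    ring
  rw [Finset.sum_congr rfl this]
  rw [Finset.sum_sub_distrib, Finset.sum_add_distrib]
  have e1 : ∑ a ∈ X, (if a ∈ Y.map (addEmb 1) then (1:ℤ) else 0)
      = ((X ∩ Y.map (addEmb 1)).card : ℤ) := by
    rw [Finset.sum_ite_mem, Finset.sum_const]; simp
  have e2 : ∑ a ∈ X, (if 0 < a then (1:ℤ) else 0)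
      = ((X.filter (fun a => 0 < a)).card : ℤ) := by
    rw [Finset.sum_ite, Finset.sum_const, Finset.sum_const]; simp
  rw [e1, e2]

-- L3
lemma sdiff_shiftUp (X Y : Finset ℕ) :
    ((X \ shiftUp Y 1).card : ℤ)
      = ((X.filter (fun a => 0 < a)).card : ℤ) - ((X ∩ Y.map (addEmb 1)).card : ℤ) := by
  have h1 : X \ shiftUp Y 1 = X.filter (fun a => 0 < a) \ (X ∩ Y.map (addEmb 1)) := by
    ext a
    simp only [Finset.mem_sdiff, Finset.mem_filter, Finset.mem_inter, shiftUp_one,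
      Finset.mem_insert, Finset.mem_map, addEmb, Function.Embedding.coeFn_mk]
    constructor
    · rintro ⟨ha, h⟩
      push_neg at h
      refine ⟨⟨ha, by omega⟩, ?_⟩
      rintro ⟨-, b, hb, rfl⟩
      exact h.2 b hb rfl
    · rintro ⟨⟨ha, hpos⟩, h⟩
      refine ⟨ha, ?_⟩
      push_neg
      exact ⟨by omega, fun b hb hba => h ⟨ha, b, hb, hba⟩⟩
  have h2 : X ∩ Y.map (addEmb 1) ⊆ X.filter (fun a => 0 < a) := by
    intro a ha
    simp only [Finset.mem_inter, Finset.mem_map, addEmb, Function.Embedding.coeFn_mk] at ha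
    obtain ⟨h3, b, _, hb⟩ := ha
    simp only [Finset.mem_filter]
    exact ⟨h3, by omega⟩
  rw [h1, Finset.card_sdiff_of_subset h2]
  have := Finset.card_le_card h2
  push_cast [Nat.cast_sub this]
  ring

def Tz (X Y : Finset ℕ) : ℤ := gz X Y + gz Y X + ezz X Y

lemma card_sdiff_int (X Y : Finset ℕ) :
    ((X \ Y).card : ℤ) = (X.card : ℤ) - ((X ∩ Y).card : ℤ) := by
  have := Finset.card_sdiff_add_card_inter X Y
  omega

lemma card_filter_pos (Y : Finset ℕ) :
    ((Y.filter (fun a => 0 < a)).card : ℤ)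
      = (Y.card : ℤ) - (if 0 ∈ Y then 1 else 0) := by
  have h : Y.filter (fun a => 0 < a) = Y.erase 0 := by
    ext a
    simp only [Finset.mem_filter, Finset.mem_erase]
    constructor <;> rintro ⟨h1, h2⟩
    exacts [⟨by omega, h1⟩, ⟨h2, by omega⟩]
  rw [h]
  by_cases h0 : 0 ∈ Y
  · rw [if_pos h0, Finset.card_erase_of_mem h0]
    have : 1 ≤ Y.card := Finset.card_pos.mpr ⟨0, h0⟩
    omega
  · rw [if_neg h0, Finset.erase_eq_of_notMem h0]; ring

lemma card_shiftUp_sdiff (X Y : Finset ℕ) :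
    (((shiftUp X 1) \ Y).card : ℤ)
      = (if 0 ∈ Y then 0 else 1) + (X.card : ℤ) - ((X.map (addEmb 1) ∩ Y).card : ℤ) := by
  rw [shiftUp_one]
  have hmap : ((X.map (addEmb 1) \ Y).card : ℤ)
      = (X.card : ℤ) - ((X.map (addEmb 1) ∩ Y).card : ℤ) := by
    rw [card_sdiff_int, Finset.card_map]
  by_cases h0 : 0 ∈ Y
  · have : insert 0 (X.map (addEmb 1)) \ Y = X.map (addEmb 1) \ Y := by
      rw [Finset.insert_sdiff_of_mem _ h0]
    rw [this, hmap, if_pos h0]; ring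
  · have : insert 0 (X.map (addEmb 1)) \ Y = insert 0 (X.map (addEmb 1) \ Y) := by
      rw [Finset.insert_sdiff_of_notMem _ h0]
    rw [this, Finset.card_insert_of_notMem (by simp [zero_notMem_map_add_one X]), if_neg h0]
    push_cast
    rw [hmap]; ring

lemma Tz_step_right (X Y : Finset ℕ) :
    Tz X (shiftUp Y 1) = Tz X Y + (Y.card : ℤ) - (X.card : ℤ) := by
  unfold Tz ezz
  rw [gz_shiftUp_right, gz_shiftUp_left, sdiff_shiftUp]
  rw [card_sdiff_int X Y, card_sdiff_int Y X, Finset.inter_comm Y X]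
  ring

lemma Tz_step_left (X Y : Finset ℕ) :
    Tz (shiftUp X 1) Y = Tz X Y + (X.card : ℤ) - (Y.card : ℤ) + 1 := by
  unfold Tz ezz
  rw [gz_shiftUp_left, gz_shiftUp_right, card_shiftUp_sdiff, card_filter_pos,
    Finset.inter_comm Y (X.map (addEmb 1))]
  by_cases h0 : 0 ∈ Y <;> simp only [h0, if_true, if_false] <;> ring

def Phi (x y s t : ℕ) : ℤ :=
  (∑ i ∈ Finset.range s, ((x : ℤ) + i - y + 1))
    + (∑ i ∈ Finset.range t, ((y : ℤ) + i - (x + s)))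

lemma Tz_shiftUp_left (X Y : Finset ℕ) (s : ℕ) :
    Tz (shiftUp X s) Y = Tz X Y + ∑ i ∈ Finset.range s, ((X.card : ℤ) + i - Y.card + 1) := by
  induction s with
  | zero => simp [shiftUp_zero]
  | succ k ih =>
    rw [← shiftUp_shiftUp, Tz_step_left, ih, Finset.sum_range_succ, card_shiftUp]
    push_cast
    ring

lemma Tz_shiftUp_right (X Y : Finset ℕ) (t : ℕ) :
    Tz X (shiftUp Y t) = Tz X Y + ∑ i ∈ Finset.range t, ((Y.card : ℤ) + i - X.card) := by
  induction t with
  | zero => simp [shiftUp_zero]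
  | succ k ih =>
    rw [← shiftUp_shiftUp, Tz_step_right, ih, Finset.sum_range_succ, card_shiftUp]
    push_cast
    ring

lemma Tz_master (X Y : Finset ℕ) (s t : ℕ) :
    Tz (shiftUp X s) (shiftUp Y t) = Tz X Y + Phi X.card Y.card s t := by
  rw [Tz_shiftUp_right, Tz_shiftUp_left, card_shiftUp, Phi]
  push_cast
  ring

lemma Phi_self (r s : ℕ) : Phi r r s s = 0 := by
  unfold Phi
  have hA : ∀ i ∈ Finset.range s, ((r : ℤ) + i - r + 1) = (i : ℤ) + 1 :=
    fun i _ => by ring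
  have hB : ∀ i ∈ Finset.range s, ((r : ℤ) + i - (r + s)) = (i : ℤ) - s :=
    fun i _ => by push_cast; ring
  rw [Finset.sum_congr rfl hA, Finset.sum_congr rfl hB, Finset.sum_add_distrib,
    Finset.sum_sub_distrib, Finset.sum_const, Finset.sum_const, Finset.card_range]
  have h := Finset.sum_range_id_mul_two s
  have hN : (∑ i ∈ Finset.range s, i) * 2 + s = s * s := by
    rcases s with _ | k
    · simp
    · rw [h]
      have h1 : (k + 1) * (k + 1 - 1) = (k + 1) * k := rfl
      have h2 : (k + 1) * (k + 1) = (k + 1) * k + (k + 1) := by ring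
      omega
  have hs : (∑ i ∈ Finset.range s, (i : ℤ)) = ((∑ i ∈ Finset.range s, i : ℕ) : ℤ) := by
    push_cast; rfl
  rw [hs]
  have hZ : ((∑ i ∈ Finset.range s, i : ℕ) : ℤ) * 2 + s = (s : ℤ) * s := by
    exact_mod_cast hN
  simp only [nsmul_eq_mul, mul_one, smul_eq_mul]
  linarith

lemma gz_diag_step (X : Finset ℕ) : gz (shiftUp X 1) (shiftUp X 1) = gz X X := by
  rw [gz_shiftUp_left, gz_shiftUp_right, sdiff_shiftUp]
  ring

lemma gz_diag_shiftUp (X : Finset ℕ) (s : ℕ) :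
    gz (shiftUp X s) (shiftUp X s) = gz X X := by
  induction s with
  | zero => rw [shiftUp_zero]
  | succ k ih => rw [← shiftUp_shiftUp, gz_diag_step, ih]

lemma filter_lt_range (n a : ℕ) (h : a ≤ n) :
    (Finset.range n).filter (· < a) = Finset.range a := by
  ext b
  simp only [Finset.mem_filter, Finset.mem_range]
  omega

lemma gz_range_self (n : ℕ) : gz (Finset.range n) (Finset.range n) = 0 := by
  unfold gz
  apply Finset.sum_eq_zero
  intro a ha
  rw [Finset.mem_range] at ha
  rw [filter_lt_range n a (le_of_lt ha), Finset.card_range]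
  ring

lemma Tz_range_self (n : ℕ) : Tz (Finset.range n) (Finset.range n) = 0 := by
  unfold Tz ezz
  rw [gz_range_self]
  simp


def pf (X : Finset ℕ) (a : ℕ) : ℕ := a - (X.filter (· < a)).card

lemma partitionOf_def (X : Finset ℕ) :
    partitionOf X = Multiset.filter (· ≠ 0) (X.val.map (pf X)) := rfl

lemma range_subset_of_pf_zero {X : Finset ℕ} {a : ℕ} (ha : a ∈ X) (h : pf X a = 0) :
    Finset.range a ⊆ X := by
  have h1 : (X.filter (· < a)).card ≤ a := card_filter_lt_le X a
  have h2 : a ≤ (X.filter (· < a)).card := by unfold pf at h; omega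
  have hsub : X.filter (· < a) ⊆ Finset.range a := by
    intro b hb; simp only [Finset.mem_filter] at hb; simp [hb.2]
  have heq : X.filter (· < a) = Finset.range a :=
    Finset.eq_of_subset_of_card_le hsub (by rw [Finset.card_range]; omega)
  rw [← heq]
  exact Finset.filter_subset _ _

lemma eq_range_of_pf_zero {X : Finset ℕ} (h : ∀ a ∈ X, pf X a = 0) :
    X = Finset.range X.card := by
  have hlt : ∀ a ∈ X, a < X.card := by
    intro a ha
    have h1 : Finset.range (a + 1) ⊆ X := by
      rw [Finset.range_add_one]
      exact Finset.insert_subset ha (range_subset_of_pf_zero ha (h a ha))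
    have := Finset.card_le_card h1
    rw [Finset.card_range] at this
    omega
  have hsub : X ⊆ Finset.range X.card := fun a ha => Finset.mem_range.mpr (hlt a ha)
  exact Finset.eq_of_subset_of_card_le hsub (by rw [Finset.card_range])

section MaxStuff
variable {X : Finset ℕ} (hne : X.Nonempty)

lemma filter_lt_max' : X.filter (· < X.max' hne) = X.erase (X.max' hne) := by
  ext b
  simp only [Finset.mem_filter, Finset.mem_erase]
  constructor
  · rintro ⟨hb, hlt⟩; exact ⟨by omega, hb⟩
  · rintro ⟨hne2, hb⟩
    refine ⟨hb, ?_⟩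
    have := Finset.le_max' X b hb
    omega

lemma pf_max'_add (hne : X.Nonempty) :
    pf X (X.max' hne) + (X.card - 1) = X.max' hne ∧ X.card - 1 ≤ X.max' hne := by
  have h1 : (X.filter (· < X.max' hne)).card = X.card - 1 := by
    rw [filter_lt_max' hne, Finset.card_erase_of_mem (X.max'_mem hne)]
  have h2 : X.card - 1 ≤ X.max' hne := by
    rw [← h1]; exact card_filter_lt_le X _
  unfold pf
  omega

lemma pf_le_pf_max' (hne : X.Nonempty) {a : ℕ} (ha : a ∈ X) :
    pf X a ≤ pf X (X.max' hne) := by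
  set M := X.max' hne with hM
  have haM : a ≤ M := Finset.le_max' X a ha
  have hsub : X.filter (· < M) ⊆ X.filter (· < a) ∪ Finset.Ico a M := by
    intro b hb
    simp only [Finset.mem_filter, Finset.mem_union, Finset.mem_Ico] at hb ⊢
    rcases Nat.lt_or_ge b a with h | h
    · exact Or.inl ⟨hb.1, h⟩
    · exact Or.inr ⟨h, hb.2⟩
  have hcard : (X.filter (· < M)).card ≤ (X.filter (· < a)).card + (M - a) := by
    calc (X.filter (· < M)).card ≤ (X.filter (· < a) ∪ Finset.Ico a M).card :=
          Finset.card_le_card hsub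
      _ ≤ (X.filter (· < a)).card + (Finset.Ico a M).card := Finset.card_union_le _ _
      _ = (X.filter (· < a)).card + (M - a) := by rw [Nat.card_Ico]
  unfold pf
  omega

end MaxStuff

lemma mem_partitionOf_iff {X : Finset ℕ} {u : ℕ} :
    u ∈ partitionOf X ↔ (∃ a ∈ X, pf X a = u) ∧ u ≠ 0 := by
  rw [partitionOf_def, Multiset.mem_filter, Multiset.mem_map]
  constructor
  · rintro ⟨⟨a, ha, rfl⟩, h0⟩
    exact ⟨⟨a, ha, rfl⟩, h0⟩
  · rintro ⟨⟨a, ha, rfl⟩, h0⟩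
    exact ⟨⟨a, ha, rfl⟩, h0⟩

lemma nonempty_of_partitionOf_ne {X : Finset ℕ} (h : partitionOf X ≠ 0) : X.Nonempty := by
  rcases Multiset.exists_mem_of_ne_zero h with ⟨u, hu⟩
  rw [mem_partitionOf_iff] at hu
  obtain ⟨⟨a, ha, _⟩, _⟩ := hu
  exact ⟨a, ha⟩

lemma pf_max'_ne_zero {X : Finset ℕ} (h : partitionOf X ≠ 0) (hne : X.Nonempty) :
    pf X (X.max' hne) ≠ 0 := by
  rcases Multiset.exists_mem_of_ne_zero h with ⟨u, hu⟩
  rw [mem_partitionOf_iff] at hu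
  obtain ⟨⟨a, ha, rfl⟩, h0⟩ := hu
  have := pf_le_pf_max' hne ha
  omega

lemma sup_partitionOf {X : Finset ℕ} (h : partitionOf X ≠ 0) (hne : X.Nonempty) :
    (partitionOf X).sup = pf X (X.max' hne) := by
  apply le_antisymm
  · apply Multiset.sup_le.mpr
    intro u hu
    rw [mem_partitionOf_iff] at hu
    obtain ⟨⟨a, ha, rfl⟩, _⟩ := hu
    exact pf_le_pf_max' hne ha
  · apply Multiset.le_sup
    rw [mem_partitionOf_iff]
    exact ⟨⟨X.max' hne, X.max'_mem hne, rfl⟩, pf_max'_ne_zero h hne⟩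

lemma max'_eq_of_partitionOf {X : Finset ℕ} (h : partitionOf X ≠ 0) (hne : X.Nonempty) :
    X.max' hne = (partitionOf X).sup + (X.card - 1) := by
  rw [sup_partitionOf h hne]
  exact ((pf_max'_add hne).1).symm

lemma pf_erase_max' {X : Finset ℕ} (hne : X.Nonempty) {a : ℕ}
    (ha : a ∈ X.erase (X.max' hne)) : pf (X.erase (X.max' hne)) a = pf X a := by
  set M := X.max' hne
  have haX : a ∈ X := Finset.mem_of_mem_erase ha
  have haM : a ≤ M := Finset.le_max' X a haX
  unfold pf
  congr 2
  rw [Finset.filter_erase]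
  apply Finset.erase_eq_of_notMem
  simp only [Finset.mem_filter]
  rintro ⟨-, hlt⟩
  omega

lemma partitionOf_cons_max' {X : Finset ℕ} (h : partitionOf X ≠ 0) (hne : X.Nonempty) :
    partitionOf X = pf X (X.max' hne) ::ₘ partitionOf (X.erase (X.max' hne)) := by
  set M := X.max' hne with hM
  have hMX : M ∈ X := X.max'_mem hne
  have hval : X.val = M ::ₘ (X.erase M).val := by
    rw [Finset.erase_val]
    exact (Multiset.cons_erase (show M ∈ X.val from hMX)).symm
  rw [partitionOf_def, hval, Multiset.map_cons, partitionOf_def]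
  have hmapeq : Multiset.map (pf X) (X.erase M).val
      = Multiset.map (pf (X.erase M)) (X.erase M).val :=
    (Multiset.map_congr rfl (fun a ha => (pf_erase_max' hne ha))).symm
  rw [hmapeq]
  exact Multiset.filter_cons_of_pos _ (pf_max'_ne_zero h hne)

lemma partitionOf_eq_zero_all_pf {X : Finset ℕ} (h : partitionOf X = 0) :
    ∀ a ∈ X, pf X a = 0 := by
  intro a ha
  by_contra h0
  have : pf X a ∈ partitionOf X := mem_partitionOf_iff.mpr ⟨⟨a, ha, rfl⟩, h0⟩
  rw [h] at this
  exact absurd this (Multiset.notMem_zero _)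

lemma beta_unique : ∀ (n : ℕ) (X Y : Finset ℕ), X.card = n → Y.card = n →
    partitionOf X = partitionOf Y → X = Y := by
  intro n
  induction n with
  | zero =>
    intro X Y hX hY _
    rw [Finset.card_eq_zero] at hX hY
    rw [hX, hY]
  | succ k ih =>
    intro X Y hX hY hp
    by_cases h0 : partitionOf X = 0
    · have h0' : partitionOf Y = 0 := hp ▸ h0
      have e1 := eq_range_of_pf_zero (partitionOf_eq_zero_all_pf h0)
      have e2 := eq_range_of_pf_zero (partitionOf_eq_zero_all_pf h0')
      rw [e1, e2, hX, hY]
    · have h0' : partitionOf Y ≠ 0 := hp ▸ h0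
      have hneX : X.Nonempty := nonempty_of_partitionOf_ne h0
      have hneY : Y.Nonempty := nonempty_of_partitionOf_ne h0'
      have hMeq : X.max' hneX = Y.max' hneY := by
        rw [max'_eq_of_partitionOf h0 hneX, max'_eq_of_partitionOf h0' hneY, hp, hX, hY]
      have hpfeq : pf X (X.max' hneX) = pf Y (Y.max' hneY) := by
        rw [← sup_partitionOf h0 hneX, ← sup_partitionOf h0' hneY, hp]
      have hconsX := partitionOf_cons_max' h0 hneX
      have hconsY := partitionOf_cons_max' h0' hneY
      rw [hconsX, hconsY, hpfeq, Multiset.cons_inj_right] at hp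
      have hcX : (X.erase (X.max' hneX)).card = k := by
        rw [Finset.card_erase_of_mem (X.max'_mem hneX), hX]
        omega
      have hcY : (Y.erase (Y.max' hneY)).card = k := by
        rw [Finset.card_erase_of_mem (Y.max'_mem hneY), hY]
        omega
      have herase := ih _ _ hcX hcY hp
      have : insert (X.max' hneX) (X.erase (X.max' hneX))
          = insert (Y.max' hneY) (Y.erase (Y.max' hneY)) := by
        rw [herase, hMeq]
      rwa [Finset.insert_erase (X.max'_mem hneX), Finset.insert_erase (Y.max'_mem hneY)] at this

lemma pf_zero (X : Finset ℕ) : pf X 0 = 0 := by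
  unfold pf; omega

lemma pf_shiftUp_succ (X : Finset ℕ) (a : ℕ) :
    pf (shiftUp X 1) (a + 1) = pf X a := by
  have hcard : ((shiftUp X 1).filter (· < a + 1)).card = (X.filter (· < a)).card + 1 := by
    rw [shiftUp_one, Finset.filter_insert, if_pos (by omega : (0:ℕ) < a + 1),
      filter_map_add_one]
    rw [Finset.card_insert_of_notMem (by simp [addEmb]), Finset.card_map]
    congr 2
    apply Finset.filter_congr
    intro b _
    omega
  unfold pf
  rw [hcard]
  omega

lemma partitionOf_shiftUp_one (X : Finset ℕ) :
    partitionOf (shiftUp X 1) = partitionOf X := by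
  have hval : (shiftUp X 1).val = 0 ::ₘ X.val.map (addEmb 1) := by
    rw [shiftUp_one, Finset.insert_val_of_notMem (zero_notMem_map_add_one X),
      Finset.map_val]
  rw [partitionOf_def, hval, Multiset.map_cons, pf_zero, Multiset.map_map,
    Multiset.filter_cons_of_neg _ (by simp), partitionOf_def]
  congr 1
  apply Multiset.map_congr rfl
  intro a _
  show pf (shiftUp X 1) (a + 1) = pf X a
  exact pf_shiftUp_succ X a

lemma partitionOf_shiftUp (X : Finset ℕ) (s : ℕ) :
    partitionOf (shiftUp X s) = partitionOf X := by
  induction s with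
  | zero =>
    rw [shiftUp_zero]
  | succ k ih => rw [← shiftUp_shiftUp, partitionOf_shiftUp_one, ih]


def gn (X Y : Finset ℕ) : ℕ := ∑ a ∈ X, (a - (Y.filter (· < a)).card)

lemma count_pairs (X Y : Finset ℕ) (M : ℕ) (hX : X ⊆ Finset.range M)
    (c : Prop) [Decidable c] :
    ((Finset.range M ×ˢ Finset.range M).filter
        (fun p : ℕ × ℕ => p.1 ∈ X ∧ p.2 ∉ Y ∧ (p.2 < p.1 ∨ (p.1 = p.2 ∧ c)))).card
      = gn X Y + if c then (X \ Y).card else 0 := by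
  rw [Finset.card_filter, Finset.sum_product]
  have step1 : ∀ a ∈ Finset.range M,
      (∑ b ∈ Finset.range M,
          if (a ∈ X ∧ b ∉ Y ∧ (b < a ∨ (a = b ∧ c))) then 1 else 0)
        = if a ∈ X then (a - (Y.filter (· < a)).card)
            + (if c ∧ a ∉ Y then 1 else 0) else 0 := by
    intro a ha
    rw [Finset.mem_range] at ha
    by_cases hax : a ∈ X
    · rw [if_pos hax]
      have hsimp : ∀ b, (a ∈ X ∧ b ∉ Y ∧ (b < a ∨ (a = b ∧ c)))
          ↔ ((b ∉ Y ∧ b < a) ∨ (b ∉ Y ∧ a = b ∧ c)) := by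
        intro b
        constructor
        · rintro ⟨-, hb, hor⟩
          rcases hor with h | h
          exacts [Or.inl ⟨hb, h⟩, Or.inr ⟨hb, h⟩]
        · rintro (⟨hb, h⟩ | ⟨hb, h⟩)
          exacts [⟨hax, hb, Or.inl h⟩, ⟨hax, hb, Or.inr h⟩]
      simp only [hsimp]
      rw [← Finset.card_filter]
      have hsplit : (Finset.range M).filter
            (fun b => (b ∉ Y ∧ b < a) ∨ (b ∉ Y ∧ a = b ∧ c))
          = (Finset.range M).filter (fun b => b ∉ Y ∧ b < a)
            ∪ (Finset.range M).filter (fun b => b ∉ Y ∧ a = b ∧ c) :=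
        Finset.filter_or _ _ _
      have hdisj : Disjoint ((Finset.range M).filter (fun b => b ∉ Y ∧ b < a))
          ((Finset.range M).filter (fun b => b ∉ Y ∧ a = b ∧ c)) := by
        rw [Finset.disjoint_left]
        intro b hb hb'
        simp only [Finset.mem_filter] at hb hb'
        omega
      rw [hsplit, Finset.card_union_of_disjoint hdisj]
      congr 1
      · -- first part
        have h1 : (Finset.range M).filter (fun b => b ∉ Y ∧ b < a)
            = (Finset.range a).filter (fun b => b ∉ Y) := by
          ext b
          simp only [Finset.mem_filter, Finset.mem_range]
          constructor
          · rintro ⟨-, hb, hba⟩; exact ⟨hba, hb⟩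
          · rintro ⟨hba, hb⟩; exact ⟨by omega, hb, hba⟩
        rw [h1]
        have h2 : ((Finset.range a).filter (fun b => b ∈ Y)).card
              + ((Finset.range a).filter (fun b => b ∉ Y)).card = a := by
          rw [Finset.card_filter_add_card_filter_not, Finset.card_range]
        have h3 : (Finset.range a).filter (fun b => b ∈ Y) = Y.filter (· < a) := by
          ext b
          simp only [Finset.mem_filter, Finset.mem_range]
          exact ⟨fun ⟨u, v⟩ => ⟨v, u⟩, fun ⟨u, v⟩ => ⟨v, u⟩⟩
        rw [h3] at h2
        omega
      · -- second part
        by_cases hc : c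
        · by_cases hy : a ∈ Y
          · rw [if_neg (by tauto)]
            rw [Finset.card_eq_zero]
            apply Finset.filter_false_of_mem
            intro b _
            rintro ⟨hb, rfl, -⟩
            exact hb hy
          · rw [if_pos ⟨hc, hy⟩]
            have : (Finset.range M).filter (fun b => b ∉ Y ∧ a = b ∧ c) = {a} := by
              ext b
              simp only [Finset.mem_filter, Finset.mem_range, Finset.mem_singleton]
              constructor
              · rintro ⟨-, -, rfl, -⟩; rfl
              · rintro rfl; exact ⟨ha, hy, rfl, hc⟩
            rw [this, Finset.card_singleton]
        · rw [if_neg (by tauto), Finset.card_eq_zero]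
          apply Finset.filter_false_of_mem
          intro b _
          rintro ⟨-, -, h⟩
          exact hc h
    · rw [if_neg hax]
      apply Finset.sum_eq_zero
      intro b _
      rw [if_neg (by tauto)]
  rw [Finset.sum_congr rfl step1]
  rw [Finset.sum_ite_mem]
  rw [Finset.inter_eq_right.mpr hX]
  rw [Finset.sum_add_distrib]
  unfold gn
  congr 1
  by_cases hc : c
  · rw [if_pos hc]
    simp only [hc, true_and]
    have : X \ Y = X.filter (fun a => a ∉ Y) := Finset.sdiff_eq_filter X Y
    rw [this, Finset.card_filter]
  · rw [if_neg hc]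
    apply Finset.sum_eq_zero
    intro a _
    rw [if_neg (by tauto)]

lemma sum_swap4 {β : Type*} [Fintype β] (R : Finset ℕ) (f : ℕ → ℕ → β → β → ℕ) :
    ∑ a ∈ R, ∑ b ∈ R, ∑ i : β, ∑ j : β, f a b i j
      = ∑ i : β, ∑ j : β, ∑ a ∈ R, ∑ b ∈ R, f a b i j :=
  calc ∑ a ∈ R, ∑ b ∈ R, ∑ i : β, ∑ j : β, f a b i j
      = ∑ a ∈ R, ∑ i : β, ∑ b ∈ R, ∑ j : β, f a b i j :=
        Finset.sum_congr rfl fun a _ => Finset.sum_comm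
    _ = ∑ a ∈ R, ∑ i : β, ∑ j : β, ∑ b ∈ R, f a b i j :=
        Finset.sum_congr rfl fun a _ => Finset.sum_congr rfl fun i _ => Finset.sum_comm
    _ = ∑ i : β, ∑ a ∈ R, ∑ j : β, ∑ b ∈ R, f a b i j := Finset.sum_comm
    _ = ∑ i : β, ∑ j : β, ∑ a ∈ R, ∑ b ∈ R, f a b i j :=
        Finset.sum_congr rfl fun i _ => Finset.sum_comm

lemma card_symbolHooks {d : ℕ} (S : Fin d → Finset ℕ) :
    (symbolHooks S).card
      = ∑ i : Fin d, ∑ j : Fin d,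
          (gn (S i) (S j) + if j < i then ((S i) \ (S j)).card else 0) := by
  classical
  have hsub : ∀ i : Fin d,
      S i ⊆ Finset.range ((Finset.univ.sup fun i => (S i).sup id) + 1) := by
    intro i a ha
    rw [Finset.mem_range]
    have h1 : a ≤ (S i).sup id := Finset.le_sup (f := id) ha
    have h2 : (S i).sup id ≤ Finset.univ.sup fun i => (S i).sup id :=
      Finset.le_sup (f := fun i => (S i).sup id) (Finset.mem_univ i)
    omega
  set M := (Finset.univ.sup fun i => (S i).sup id) + 1 with hM
  rw [symbolHooks, Finset.card_filter]
  simp only [Finset.sum_product]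
  rw [sum_swap4 (Finset.range M)
    (fun a b i j => if a ∈ S i ∧ b ∉ S j ∧ (b < a ∨ (a = b ∧ j < i)) then 1 else 0)]
  refine Finset.sum_congr rfl fun i _ => Finset.sum_congr rfl fun j _ => ?_
  have := count_pairs (S i) (S j) M (hsub i) (j < i)
  rw [← this, Finset.card_filter, Finset.sum_product]


lemma gz_eq_gn (X Y : Finset ℕ) : ((gn X Y : ℕ) : ℤ) = gz X Y := by
  unfold gn gz
  push_cast [Nat.cast_sub (card_filter_lt_le Y _)]
  exact Finset.sum_congr rfl fun a _ => rfl

lemma sum_split {d : ℕ} (F : Fin d → Fin d → ℤ) :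
    ∑ i : Fin d, ∑ j : Fin d, F i j
      = (∑ i : Fin d, ∑ j : Fin d, if j < i then (F i j + F j i) else 0)
        + ∑ i : Fin d, F i i := by
  have key : ∀ i j : Fin d, F i j
      = (if j < i then F i j else 0) + (if i < j then F i j else 0)
        + (if i = j then F j i else 0) := by
    intro i j
    rcases lt_trichotomy i j with h | h | h
    · rw [if_neg (asymm h), if_pos h, if_neg (ne_of_lt h)]; ring
    · rw [if_neg (h ▸ lt_irrefl i), if_neg (h ▸ lt_irrefl i), if_pos h, h]; ring
    · rw [if_pos h, if_neg (asymm h), if_neg (ne_of_gt h)]; ring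
  calc ∑ i : Fin d, ∑ j : Fin d, F i j
      = ∑ i : Fin d, ∑ j : Fin d,
          ((if j < i then F i j else 0) + (if i < j then F i j else 0)
            + (if i = j then F j i else 0)) := by
        exact Finset.sum_congr rfl fun i _ => Finset.sum_congr rfl fun j _ => key i j
    _ = (∑ i : Fin d, ∑ j : Fin d, (if j < i then F i j else 0))
          + (∑ i : Fin d, ∑ j : Fin d, (if i < j then F i j else 0))
          + ∑ i : Fin d, ∑ j : Fin d, (if i = j then F j i else 0) := by
        simp only [Finset.sum_add_distrib]
    _ = (∑ i : Fin d, ∑ j : Fin d, (if j < i then F i j else 0))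
          + (∑ i : Fin d, ∑ j : Fin d, (if j < i then F j i else 0))
          + ∑ i : Fin d, F i i := by
        congr 1
        · congr 1
          exact Finset.sum_comm
        · exact Finset.sum_congr rfl fun i _ => by
            simp [Finset.sum_ite_eq]
    _ = (∑ i : Fin d, ∑ j : Fin d, if j < i then (F i j + F j i) else 0)
          + ∑ i : Fin d, F i i := by
        congr 1
        rw [← Finset.sum_add_distrib]
        refine Finset.sum_congr rfl fun i _ => ?_
        rw [← Finset.sum_add_distrib]
        refine Finset.sum_congr rfl fun j _ => ?_
        split_ifs <;> ring

/-- The number of hooks of a `d`-symbol `S` equals the number of hooks of its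
balanced quotient `Q(S)` plus the number of hooks of its core `C(S)`. -/
theorem card_hooks_eq_quot_add_core (d : ℕ) (hd : 0 < d) (S : Fin d → Finset ℕ)
    (Y : Fin d → Finset ℕ) (hY : IsBalancedQuotient S Y) :
    (symbolHooks S).card = (symbolHooks Y).card + (symbolHooks (coreSymbol S)).card := by
  classical
  set r := quotCard S with hr
  set N := r ⊔ (Finset.univ.sup fun i => (S i).card) with hN
  have hxN : ∀ i, (S i).card ≤ N := fun i =>
    le_trans (Finset.le_sup (f := fun i => (S i).card) (Finset.mem_univ i)) le_sup_right
  have hrN : r ≤ N := le_sup_left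
  -- the common shifted symbol
  have hA : ∀ i, shiftUp (S i) (N - (S i).card) = shiftUp (Y i) (N - r) := by
    intro i
    apply beta_unique N
    · rw [card_shiftUp]; have := hxN i; omega
    · rw [card_shiftUp, (hY i).1]; have := hrN; omega
    · rw [partitionOf_shiftUp, partitionOf_shiftUp, (hY i).2]
  -- pairwise identity for Tz
  have hTz : ∀ i j, Tz (S i) (S j)
      = Tz (Y i) (Y j) + Tz (coreSymbol S i) (coreSymbol S j) := by
    intro i j
    have h1 : Tz (shiftUp (S i) (N - (S i).card)) (shiftUp (S j) (N - (S j).card))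
        = Tz (S i) (S j) + Phi (S i).card (S j).card (N - (S i).card) (N - (S j).card) :=
      Tz_master (S i) (S j) _ _
    have h2 : Tz (shiftUp (Y i) (N - r)) (shiftUp (Y j) (N - r))
        = Tz (Y i) (Y j) + Phi (Y i).card (Y j).card (N - r) (N - r) :=
      Tz_master (Y i) (Y j) _ _
    rw [(hY i).1, (hY j).1, Phi_self] at h2
    have h3 : Tz (shiftUp (Finset.range (S i).card) (N - (S i).card))
          (shiftUp (Finset.range (S j).card) (N - (S j).card))
        = Tz (Finset.range (S i).card) (Finset.range (S j).card)
          + Phi (S i).card (S j).card (N - (S i).card) (N - (S j).card) := by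
      have := Tz_master (Finset.range (S i).card) (Finset.range (S j).card)
        (N - (S i).card) (N - (S j).card)
      rwa [Finset.card_range, Finset.card_range] at this
    rw [shiftUp_range, shiftUp_range] at h3
    have hNi : (S i).card + (N - (S i).card) = N := by have := hxN i; omega
    have hNj : (S j).card + (N - (S j).card) = N := by have := hxN j; omega
    rw [hNi, hNj, Tz_range_self] at h3
    rw [hA i, hA j, h2] at h1
    show Tz (S i) (S j)
      = Tz (Y i) (Y j) + Tz (Finset.range (S i).card) (Finset.range (S j).card)
    omega
  -- diagonal identity for gz
  have hgz : ∀ i, gz (S i) (S i)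
      = gz (Y i) (Y i) + gz (coreSymbol S i) (coreSymbol S i) := by
    intro i
    have h1 := gz_diag_shiftUp (S i) (N - (S i).card)
    have h2 := gz_diag_shiftUp (Y i) (N - r)
    rw [hA i] at h1
    show gz (S i) (S i)
      = gz (Y i) (Y i) + gz (Finset.range (S i).card) (Finset.range (S i).card)
    rw [gz_range_self, ← h1, h2]
    ring
  -- integer card formula
  have cardZ : ∀ (T : Fin d → Finset ℕ), ((symbolHooks T).card : ℤ)
      = (∑ i : Fin d, ∑ j : Fin d, if j < i then Tz (T i) (T j) else 0)
        + ∑ i : Fin d, gz (T i) (T i) := by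
    intro T
    have h1 : ((symbolHooks T).card : ℤ)
        = ∑ i : Fin d, ∑ j : Fin d,
            (gz (T i) (T j) + if j < i then ezz (T i) (T j) else 0) := by
      rw [card_symbolHooks]
      push_cast
      refine Finset.sum_congr rfl fun i _ => Finset.sum_congr rfl fun j _ => ?_
      rw [← gz_eq_gn]
      congr 1
    rw [h1, sum_split (fun i j => gz (T i) (T j) + if j < i then ezz (T i) (T j) else 0)]
    congr 1
    · refine Finset.sum_congr rfl fun i _ => Finset.sum_congr rfl fun j _ => ?_
      by_cases h : j < i
      · rw [if_pos h, if_pos h, if_pos h, if_neg (asymm h)]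
        unfold Tz
        ring
      · rw [if_neg h, if_neg h]
    · refine Finset.sum_congr rfl fun i _ => ?_
      rw [if_neg (lt_irrefl i)]
      ring
  have final : ((symbolHooks S).card : ℤ)
      = ((symbolHooks Y).card : ℤ) + ((symbolHooks (coreSymbol S)).card : ℤ) := by
    rw [cardZ S, cardZ Y, cardZ (coreSymbol S)]
    have e1 : (∑ i : Fin d, ∑ j : Fin d, if j < i then Tz (S i) (S j) else 0)
        = (∑ i : Fin d, ∑ j : Fin d, if j < i then Tz (Y i) (Y j) else 0)
          + ∑ i : Fin d, ∑ j : Fin d,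
              if j < i then Tz (coreSymbol S i) (coreSymbol S j) else 0 := by
      rw [← Finset.sum_add_distrib]
      refine Finset.sum_congr rfl fun i _ => ?_
      rw [← Finset.sum_add_distrib]
      refine Finset.sum_congr rfl fun j _ => ?_
      by_cases h : j < i
      · rw [if_pos h, if_pos h, if_pos h, hTz i j]
      · rw [if_neg h, if_neg h, if_neg h]; ring
    have e2 : (∑ i : Fin d, gz (S i) (S i))
        = (∑ i : Fin d, gz (Y i) (Y i))
          + ∑ i : Fin d, gz (coreSymbol S i) (coreSymbol S i) := by
      rw [← Finset.sum_add_distrib]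
      exact Finset.sum_congr rfl fun i _ => hgz i
    rw [e1, e2]
    ring
  exact_mod_cast final
end
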